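/- Let (X,T) be a topological dynamical system with finitely many orbits of each length, G a finite group acting on X commuting with T, (X',T') the quotient. Then O_n(T') ≤ O_n(T) + Σ_{δ ∈ Δ(G), δ>1} O_{δn}(T) for all n ≥ 1, where O_m(S) denotes the number of closed orbits of length m of S. -/

import Mathlib

def Torbit {X : Type*} (T : X → X) (x : X) : Set X := {y | ∃ i : ℕ, T^[i] x = y}

/-- The number of closed orbits of length `n` of a map. -/
noncomputable def orbitCount {X : Type*} (T : X → X) (n : ℕ) : ℕ :=
  {A : Set X | ∃ x, Function.minimalPeriod T x = n ∧ A = Torbit T x}.ncard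

theorem stmt_12 {X : Type*} [MetricSpace X] [CompactSpace X]
    {G : Type*} [Group G] [Fintype G] [MulAction G X]
    (hcont : ∀ g : G, Continuous fun y : X => g • y)
    (T : X ≃ₜ X) (hcomm : ∀ (g : G) (y : X), g • T y = T (g • y))
    (hfin : ∀ n : ℕ, {y : X | (⇑T)^[n] y = y}.Finite)
    (T' : Quotient (MulAction.orbitRel G X) → Quotient (MulAction.orbitRel G X))
    (hT' : ∀ y : X, T' (Quotient.mk (MulAction.orbitRel G X) y) =
        Quotient.mk (MulAction.orbitRel G X) (T y)) :
    ∀ n : ℕ, 1 ≤ n →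
      orbitCount T' n ≤ orbitCount (⇑T) n +
        ∑ δ ∈ (Finset.image orderOf (Finset.univ : Finset G)).erase 1,
          orbitCount (⇑T) (δ * n) := by
  classical
  intro n hn
  -- X is finite (from hfin 0)
  have hXfin : Finite X := by
    have h0 := hfin 0
    simp only [Function.iterate_zero, id_eq, Set.setOf_true] at h0
    exact Set.finite_univ_iff.mp h0
  set Δ : Finset ℕ := Finset.image orderOf (Finset.univ : Finset G) with hΔ
  set π : X → Quotient (MulAction.orbitRel G X) := Quotient.mk (MulAction.orbitRel G X) with hπ
  have hiter : ∀ (k : ℕ) (y : X), T'^[k] (π y) = π ((⇑T)^[k] y) := by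
    intro k
    induction k with
    | zero => intro y; simp
    | succ k ih =>
        intro y
        rw [Function.iterate_succ_apply, Function.iterate_succ_apply, hT', ih]
  have hcommiter : ∀ (g : G) (k : ℕ) (y : X), (⇑T)^[k] (g • y) = g • (⇑T)^[k] y := by
    intro g k
    induction k with
    | zero => intro y; simp
    | succ k ih =>
        intro y
        rw [Function.iterate_succ_apply, Function.iterate_succ_apply, ← hcomm, ih]
  have himg : ∀ y : X, π '' Torbit (⇑T) y = Torbit T' (π y) := by
    intro y
    ext z
    constructor
    · rintro ⟨w, ⟨i, rfl⟩, rfl⟩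
      exact ⟨i, hiter i y⟩
    · rintro ⟨i, rfl⟩
      exact ⟨(⇑T)^[i] y, ⟨i, rfl⟩, (hiter i y).symm⟩
  -- key lifting fact
  have key : ∀ x' : Quotient (MulAction.orbitRel G X),
      Function.minimalPeriod T' x' = n →
      ∃ δ ∈ Δ, Function.minimalPeriod (⇑T) (Quotient.out x') = δ * n := by
    intro x' hx'
    set x : X := Quotient.out x' with hxdef
    have hπx : π x = x' := Quotient.out_eq x'
    have h1 : T'^[n] x' = x' := by
      have h := Function.isPeriodicPt_minimalPeriod T' x'
      rw [hx'] at h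
      exact h
    have h2 : π ((⇑T)^[n] x) = π x := by
      rw [← hiter, hπx, h1]
    obtain ⟨g, hg⟩ : ∃ g : G, g • x = (⇑T)^[n] x := by
      have := Quotient.eq.mp h2
      exact MulAction.mem_orbit_iff.mp ((MulAction.orbitRel_apply).mp this)
    have hpow : ∀ k : ℕ, (⇑T)^[k * n] x = g ^ k • x := by
      intro k
      induction k with
      | zero => simp
      | succ k ih =>
          have hkn : (k + 1) * n = k * n + n := by ring
          rw [hkn, Nat.add_comm, Function.iterate_add_apply, ih, hcommiter, ← hg,
            smul_smul, ← pow_succ]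
    set d : ℕ := orderOf g with hd
    have hdpos : 0 < d := orderOf_pos g
    have hper : Function.IsPeriodicPt (⇑T) (d * n) x := by
      show (⇑T)^[d * n] x = x
      rw [hpow d, pow_orderOf_eq_one, one_smul]
    set m : ℕ := Function.minimalPeriod (⇑T) x with hm
    have hmpos : 0 < m := hper.minimalPeriod_pos (by positivity)
    have hmdvd : m ∣ d * n := hper.minimalPeriod_dvd
    have hndvd : n ∣ m := by
      have hpm : Function.IsPeriodicPt (⇑T) m x := Function.isPeriodicPt_minimalPeriod (⇑T) x
      have : T'^[m] x' = x' := by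
        rw [← hπx, hiter, hpm]
      have hpm' : Function.IsPeriodicPt T' m x' := this
      have := hpm'.minimalPeriod_dvd
      rwa [hx'] at this
    obtain ⟨δ, hδ⟩ := hndvd
    have hnpos : 0 < n := hn
    have hδd : δ ∣ d := by
      have h' : n * δ ∣ n * d := by
        rw [← hδ, Nat.mul_comm n d]; exact hmdvd
      exact (Nat.mul_dvd_mul_iff_left hn).mp h'
    have hδpos : 0 < δ := by
      rcases Nat.eq_zero_or_pos δ with h | h
      · subst h; simp at hδ; omega
      · exact h
    refine ⟨δ, ?_, by show Function.minimalPeriod (⇑T) x = δ * n; rw [← hm, hδ, Nat.mul_comm n δ]⟩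
    -- δ is the order of g ^ (d / δ)
    rw [hΔ, Finset.mem_image]
    refine ⟨g ^ (d / δ), Finset.mem_univ _, ?_⟩
    rw [orderOf_pow]
    have hdvd2 : d / δ ∣ d := Nat.div_dvd_of_dvd hδd
    rw [Nat.gcd_eq_right hdvd2]
    exact Nat.div_div_self hδd (by omega)
  -- counting
  have hcount' : orbitCount T' n =
      {A : Set (Quotient (MulAction.orbitRel G X)) |
        ∃ x', Function.minimalPeriod T' x' = n ∧ A = Torbit T' x'}.ncard := rfl
  set S' : Set (Set (Quotient (MulAction.orbitRel G X))) :=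
    {A | ∃ x', Function.minimalPeriod T' x' = n ∧ A = Torbit T' x'} with hS'
  set Sδ : ℕ → Set (Set X) :=
    fun m => {A | ∃ x, Function.minimalPeriod (⇑T) x = m ∧ A = Torbit (⇑T) x} with hSδ
  set f : Set (Quotient (MulAction.orbitRel G X)) → Set X :=
    fun A => if h : A ∈ S' then Torbit (⇑T) (Quotient.out h.choose) else ∅ with hf
  have hmaps : Set.MapsTo f S' (⋃ δ ∈ Δ, Sδ (δ * n)) := by
    intro A hA
    rw [hf]
    simp only [hA, dif_pos]
    obtain ⟨hA1, hA2⟩ := hA.choose_spec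
    obtain ⟨δ, hδΔ, hδ⟩ := key hA.choose hA1
    exact Set.mem_biUnion hδΔ ⟨Quotient.out hA.choose, hδ, rfl⟩
  have hinj : Set.InjOn f S' := by
    intro A₁ h₁ A₂ h₂ hfeq
    rw [hf] at hfeq
    simp only [h₁, h₂, dif_pos] at hfeq
    obtain ⟨h₁1, h₁2⟩ := h₁.choose_spec
    obtain ⟨h₂1, h₂2⟩ := h₂.choose_spec
    have : π '' Torbit (⇑T) (Quotient.out h₁.choose) =
        π '' Torbit (⇑T) (Quotient.out h₂.choose) := by rw [hfeq]
    have hout : ∀ q : Quotient (MulAction.orbitRel G X), π (Quotient.out q) = q :=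
      fun q => Quotient.out_eq q
    rw [himg, himg, hout, hout] at this
    rw [h₁2, h₂2, this]
  have hle1 : S'.ncard ≤ (⋃ δ ∈ Δ, Sδ (δ * n)).ncard :=
    Set.ncard_le_ncard_of_injOn f hmaps hinj (Set.toFinite _)
  have hle2 : ∀ s : Finset ℕ, (⋃ δ ∈ s, Sδ (δ * n)).ncard ≤ ∑ δ ∈ s, (Sδ (δ * n)).ncard := by
    intro s
    induction s using Finset.induction with
    | empty => simp
    | insert _ _ h ih =>
        rw [Finset.set_biUnion_insert, Finset.sum_insert h]
        exact le_trans (Set.ncard_union_le _ _) (Nat.add_le_add_left ih _)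
  have h1Δ : (1 : ℕ) ∈ Δ := by
    rw [hΔ, Finset.mem_image]
    exact ⟨1, Finset.mem_univ _, orderOf_one⟩
  have hsum : ∑ δ ∈ Δ, (Sδ (δ * n)).ncard =
      orbitCount (⇑T) n + ∑ δ ∈ Δ.erase 1, orbitCount (⇑T) (δ * n) := by
    rw [← Finset.add_sum_erase Δ _ h1Δ]
    congr 1
    show (Sδ (1 * n)).ncard = orbitCount (⇑T) n
    rw [one_mul]
    rfl
  calc orbitCount T' n = S'.ncard := rfl
    _ ≤ (⋃ δ ∈ Δ, Sδ (δ * n)).ncard := hle1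
    _ ≤ ∑ δ ∈ Δ, (Sδ (δ * n)).ncard := hle2 Δ
    _ = _ := hsum
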